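/- Suppose a, b are nonnegative integers with [a]_n a multiple class of e_l and [b]_n ∈ [β_{l+1}]_{e_l}, where a occurs as ν_Γ(Ω_a) for Ω_a in a separated family with pairwise incongruent classes mod n, b likewise; and suppose (r_b − r_a)β̄_{l+1} + (b − a) ≡ 0 (mod n) with 0 ≤ r_a, r_b < n_{l+1}. Then exactly one of the following holds: (1) r_b = r_a + 1, b ∈ (e_l), a ∈ [β_{l+1}]_{e_l}; or (2) r_b = n_{l+1} − 1, r_a = 0, b ∈ [β_{l+1}]_{e_l}, a ∈ (e_l). (Purely arithmetic core of Proposition on conflicting pairs.) -/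
import Mathlib


/-- Arithmetic core of the proposition on conflicting pairs.  Here `el = e_l`,
`el1 = e_{l+1}`, `βl = β_{l+1}`, `bb = β̄_{l+1}`, `nl = n_{l+1}`, and `a`, `b` are the
`Γ`-orders of two members of a separated family, twisted by powers `r_a ≤ r_b` of the
approximate root (the ordering `j < k` of the pair).  Then exactly one of the two
stated alternatives holds. -/
theorem conflicting_pairs_arith (n el el1 βl bb nl : ℕ)
    (hn : 2 ≤ n) (heln : el ∣ n) (hel1 : el1 ∣ el)
    (hbbe : el1 ∣ bb) (hbbne : ¬ el ∣ bb)
    (hcong : bb % el = βl % el)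
    (hleast : IsLeast {r : ℕ | 0 < r ∧ el ∣ r * bb} nl)
    (a b r_a r_b : ℕ)
    (ha : el ∣ a ∨ a % el = βl % el)
    (hb : el ∣ b ∨ b % el = βl % el)
    (hra : r_a < nl) (hrb : r_b < nl) (hr : r_a ≤ r_b)
    (hdist : ¬ (r_a = r_b ∧ a % n = b % n))
    (hmain : (n : ℤ) ∣ (((r_b : ℤ) - r_a) * bb + ((b : ℤ) - a))) :
    Xor'
      (r_b = r_a + 1 ∧ el ∣ b ∧ a % el = βl % el)
      (r_b = nl - 1 ∧ r_a = 0 ∧ b % el = βl % el ∧ el ∣ a) := by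
  have hel0 : el ≠ 0 := by
    rintro rfl
    simp only [Nat.zero_dvd] at heln
    omega
  haveI : NeZero el := ⟨hel0⟩
  have hmin : ∀ m, m < nl → el ∣ m * bb → m = 0 := by
    intro m hm hd
    by_contra h
    exact absurd (hleast.2 ⟨Nat.pos_of_ne_zero h, hd⟩) (by omega)
  have hnl1 : 0 < nl := hleast.1.1
  have hnl2 : nl ≠ 1 := by
    rintro rfl
    exact hbbne (by simpa using hleast.1.2)
  set d := r_b - r_a with hd
  have hdlt : d < nl := lt_of_le_of_lt (Nat.sub_le _ _) hrb
  have hElZ : (el : ℤ) ∣ ((d : ℤ) * bb + ((b : ℤ) - a)) := by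
    have h1 : (el : ℤ) ∣ (((r_b : ℤ) - r_a) * bb + ((b : ℤ) - a)) :=
      dvd_trans (Int.natCast_dvd_natCast.mpr heln) hmain
    have h2 : (d : ℤ) = (r_b : ℤ) - r_a := by
      rw [hd]; push_cast [Nat.cast_sub hr]; ring
    rwa [h2]
  have E : (d : ZMod el) * bb + b - a = 0 := by
    have h := (ZMod.intCast_zmod_eq_zero_iff_dvd _ el).2 hElZ
    push_cast at h
    linear_combination h
  have heqbb : (bb : ZMod el) = βl :=
    (ZMod.natCast_eq_natCast_iff _ _ _).2 hcong
  have hbbne' : (bb : ZMod el) ≠ 0 := fun h =>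
    hbbne ((ZMod.natCast_eq_zero_iff _ _).1 h)
  have hd0 : d = 0 → False := by
    intro h
    have hab : r_a = r_b := by omega
    have hdvd : (n : ℤ) ∣ ((b : ℤ) - a) := by
      have h' := hmain
      rw [← hab] at h'
      simpa using h'
    exact hdist ⟨hab, Nat.modEq_iff_dvd.mpr hdvd⟩
  have hor : (r_b = r_a + 1 ∧ el ∣ b ∧ a % el = βl % el) ∨
      (r_b = nl - 1 ∧ r_a = 0 ∧ b % el = βl % el ∧ el ∣ a) := by
    rcases ha with hA | hA <;> rcases hb with hB | hB
    · exfalso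
      have hA' : (a : ZMod el) = 0 := (ZMod.natCast_eq_zero_iff _ _).2 hA
      have hB' : (b : ZMod el) = 0 := (ZMod.natCast_eq_zero_iff _ _).2 hB
      have hdvd : el ∣ d * bb := by
        rw [← ZMod.natCast_eq_zero_iff]
        push_cast
        linear_combination E - hB' + hA'
      exact hd0 (hmin d hdlt hdvd)
    · right
      have hA' : (a : ZMod el) = 0 := (ZMod.natCast_eq_zero_iff _ _).2 hA
      have hB' : (b : ZMod el) = (βl : ZMod el) := (ZMod.natCast_eq_natCast_iff _ _ _).2 hB
      have hdvd : el ∣ (d + 1) * bb := by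
        rw [← ZMod.natCast_eq_zero_iff]
        push_cast
        linear_combination E + heqbb - hB' + hA'
      have hle : nl ≤ d + 1 := hleast.2 ⟨Nat.succ_pos _, hdvd⟩
      exact ⟨by omega, by omega, hB, hA⟩
    · left
      have hA' : (a : ZMod el) = (βl : ZMod el) := (ZMod.natCast_eq_natCast_iff _ _ _).2 hA
      have hB' : (b : ZMod el) = 0 := (ZMod.natCast_eq_zero_iff _ _).2 hB
      have hdne : d ≠ 0 := by
        intro h
        apply hbbne'
        have E0 := E
        rw [h] at E0
        push_cast at E0
        linear_combination heqbb - hA' - E0 + hB'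
      obtain ⟨m, hm⟩ : ∃ m, d = m + 1 := ⟨d - 1, by omega⟩
      have hdvd : el ∣ m * bb := by
        rw [← ZMod.natCast_eq_zero_iff]
        push_cast
        have E' := E
        rw [hm] at E'
        push_cast at E'
        linear_combination E' - heqbb - hB' + hA'
      have hm0 : m = 0 := hmin m (by omega) hdvd
      exact ⟨by omega, hB, hA⟩
    · exfalso
      have hA' : (a : ZMod el) = (βl : ZMod el) := (ZMod.natCast_eq_natCast_iff _ _ _).2 hA
      have hB' : (b : ZMod el) = (βl : ZMod el) := (ZMod.natCast_eq_natCast_iff _ _ _).2 hB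
      have hdvd : el ∣ d * bb := by
        rw [← ZMod.natCast_eq_zero_iff]
        push_cast
        linear_combination E - hB' + hA'
      exact hd0 (hmin d hdlt hdvd)
  have hnotboth : ¬ ((r_b = r_a + 1 ∧ el ∣ b ∧ a % el = βl % el) ∧
      (r_b = nl - 1 ∧ r_a = 0 ∧ b % el = βl % el ∧ el ∣ a)) := by
    rintro ⟨⟨_, hdb, _⟩, ⟨_, _, hbm, _⟩⟩
    apply hbbne
    apply Nat.dvd_of_mod_eq_zero
    obtain ⟨k, rfl⟩ := hdb
    have hb0 : el * k % el = 0 := Nat.mul_mod_right el k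
    omega
  rcases hor with h | h
  · exact Or.inl ⟨h, fun h' => hnotboth ⟨h, h'⟩⟩
  · exact Or.inr ⟨h, fun h' => hnotboth ⟨h', h⟩⟩
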